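/- If F : E → J and G : H → J are bounded operators between Hilbert spaces with F F* = G G*, then there exist contractions C : E → H and D : H → E with F = G C and G = F D; moreover if F and G are injective then C D = id and D C restricted appropriately is the identity, so C is invertible. -/

import Mathlib

open ContinuousLinearMap Submodule

local notation "⟪" x ", " y "⟫" => @inner ℂ _ _ x y

/-- Construct the intertwiner `V : H →L[ℂ] E` with `V ∘ G† = F†` and `‖V‖ ≤ 1`,
given that the adjoints have equal norms pointwise. -/
theorem douglas_aux
    {E H J : Type*} [NormedAddCommGroup E] [InnerProductSpace ℂ E] [CompleteSpace E]
    [NormedAddCommGroup H] [InnerProductSpace ℂ H] [CompleteSpace H]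
    [NormedAddCommGroup J] [InnerProductSpace ℂ J] [CompleteSpace J]
    (F : E →L[ℂ] J) (G : H →L[ℂ] J)
    (hn : ∀ x : J, ‖ContinuousLinearMap.adjoint F x‖ = ‖ContinuousLinearMap.adjoint G x‖) :
    ∃ V : H →L[ℂ] E, ‖V‖ ≤ 1 ∧
      ∀ x : J, V (ContinuousLinearMap.adjoint G x) = ContinuousLinearMap.adjoint F x := by
  set F' := ContinuousLinearMap.adjoint F with hF'
  set G' := ContinuousLinearMap.adjoint G with hG'
  have key : ∀ a b : J, G' a = G' b → F' a = F' b := by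
    intro a b hab
    have h1 : ‖F' (a - b)‖ = ‖G' (a - b)‖ := hn _
    rw [map_sub, map_sub, hab, sub_self, norm_zero, norm_eq_zero, sub_eq_zero] at h1
    exact h1
  set S : Submodule ℂ H := LinearMap.range (G' : J →ₗ[ℂ] H) with hS
  have hp : ∀ y : S, G' (y.2.choose) = (y : H) := fun y => y.2.choose_spec
  set p : S → J := fun y => y.2.choose with hpdef
  set V₀ : S →ₗ[ℂ] E :=
    { toFun := fun y => F' (p y)
      map_add' := by
        intro y z
        show F' (p (y + z)) = F' (p y) + F' (p z)
        have h2 : F' (p (y + z)) = F' (p y + p z) := by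
          refine key _ _ ?_
          rw [map_add, hp, hp, hp]; rfl
        rw [h2, map_add]
      map_smul' := by
        intro c y
        show F' (p (c • y)) = c • F' (p y)
        have h2 : F' (p (c • y)) = F' (c • p y) := by
          refine key _ _ ?_
          rw [map_smul, hp, hp]; rfl
        rw [h2, map_smul] } with hV₀
  have hnorm : ∀ y : S, ‖V₀ y‖ = ‖y‖ := by
    intro y
    show ‖F' (p y)‖ = ‖y‖
    rw [hn (p y), show G' (p y) = (y : H) from hp y]
    rfl
  set K : Submodule ℂ H := S.topologicalClosure with hK
  haveI : CompleteSpace K := S.isClosed_topologicalClosure.completeSpace_coe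
  set e : S →L[ℂ] K :=
    { toLinearMap := Submodule.inclusion S.le_topologicalClosure
      cont := (AddMonoidHomClass.isometry_of_norm (Submodule.inclusion S.le_topologicalClosure : S →ₗ[ℂ] K) (fun _ => rfl)).continuous } with he
  have hdense : DenseRange e := by
    intro k
    rw [mem_closure_iff_seq_limit]
    have hk : (k : H) ∈ closure (S : Set H) := by
      have := k.2
      rwa [← Submodule.topologicalClosure_coe]
    rw [mem_closure_iff_seq_limit] at hk
    obtain ⟨u, hu, hlim⟩ := hk
    refine ⟨fun n => e ⟨u n, hu n⟩, fun n => ⟨⟨u n, hu n⟩, rfl⟩, ?_⟩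
    exact tendsto_subtype_rng.mpr hlim
  have hbound : ∀ x : S, ‖x‖ ≤ ((1 : NNReal) : ℝ) * ‖e x‖ := by
    intro x; rw [NNReal.coe_one, one_mul]; rfl
  set f : S →L[ℂ] E :=
    ⟨V₀, (AddMonoidHomClass.isometry_of_norm _ hnorm).continuous⟩ with hf
  have hfn : ‖f‖ ≤ 1 := by
    apply opNorm_le_bound _ zero_le_one
    intro x; rw [one_mul]; exact le_of_eq (hnorm x)
  have hUI := (ContinuousLinearMap.isUniformEmbedding_of_bound _ hbound).isUniformInducing
  set VK := f.extend e with hVK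
  have hVKn : ‖VK‖ ≤ 1 := by
    calc ‖VK‖ ≤ ((1 : NNReal) : ℝ) * ‖f‖ := f.opNorm_extend_le hdense hbound
    _ ≤ 1 := by rw [NNReal.coe_one, one_mul]; exact hfn
  refine ⟨VK.comp (orthogonalProjection K), ?_, ?_⟩
  · refine le_trans (opNorm_comp_le _ _) ?_
    calc ‖VK‖ * ‖(orthogonalProjection K : H →L[ℂ] K)‖ ≤ 1 * 1 :=
      mul_le_mul hVKn (orthogonalProjection_norm_le K) (norm_nonneg (orthogonalProjection K)) zero_le_one
    _ = 1 := one_mul 1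
  · intro x
    have hmemS : G' x ∈ S := ⟨x, rfl⟩
    have hmem : G' x ∈ K := S.le_topologicalClosure hmemS
    have h3 : orthogonalProjection K (G' x) = ⟨G' x, hmem⟩ :=
      orthogonalProjection_mem_subspace_eq_self (⟨G' x, hmem⟩ : K)
    have h4 : (⟨G' x, hmem⟩ : K) = e ⟨G' x, hmemS⟩ := rfl
    show VK (orthogonalProjection K (G' x)) = F' x
    rw [h3, h4, ContinuousLinearMap.extend_eq _ hdense hUI]
    show F' (p ⟨G' x, hmemS⟩) = F' x
    exact key _ _ (hp ⟨G' x, hmemS⟩)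

theorem dense_range_adjoint
    {E J : Type*} [NormedAddCommGroup E] [InnerProductSpace ℂ E] [CompleteSpace E]
    [NormedAddCommGroup J] [InnerProductSpace ℂ J] [CompleteSpace J]
    (F : E →L[ℂ] J) (hF : Function.Injective F) :
    Dense (Set.range (ContinuousLinearMap.adjoint F)) := by
  set F' := ContinuousLinearMap.adjoint F with hF'
  have horth : (LinearMap.range (F' : J →ₗ[ℂ] E))ᗮ = ⊥ := by
    rw [Submodule.eq_bot_iff]
    intro v hv
    have hGv : F v = 0 := by
      have h1 : ∀ x : J, ⟪F' x, v⟫ = 0 := fun x => hv _ ⟨x, rfl⟩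
      have h2 : ⟪F v, F v⟫ = 0 := by
        rw [← ContinuousLinearMap.adjoint_inner_left]
        exact h1 (F v)
      exact inner_self_eq_zero.mp h2
    exact hF (hGv.trans (map_zero F).symm)
  have hclos : (LinearMap.range (F' : J →ₗ[ℂ] E)).topologicalClosure = ⊤ := by
    rw [← Submodule.orthogonal_orthogonal_eq_closure, horth, Submodule.bot_orthogonal_eq_top]
  have := Submodule.dense_iff_topologicalClosure_eq_top.mpr hclos
  rwa [LinearMap.coe_range] at this

theorem factorization_of_equal_defects
    {E H J : Type*} [NormedAddCommGroup E] [InnerProductSpace ℂ E] [CompleteSpace E]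
    [NormedAddCommGroup H] [InnerProductSpace ℂ H] [CompleteSpace H]
    [NormedAddCommGroup J] [InnerProductSpace ℂ J] [CompleteSpace J]
    (F : E →L[ℂ] J) (G : H →L[ℂ] J)
    (hFG : F.comp (ContinuousLinearMap.adjoint F) = G.comp (ContinuousLinearMap.adjoint G)) :
    ∃ (C : E →L[ℂ] H) (D : H →L[ℂ] E),
      ‖C‖ ≤ 1 ∧ ‖D‖ ≤ 1 ∧ F = G.comp C ∧ G = F.comp D ∧
      (Function.Injective F → Function.Injective G →
        C.comp D = ContinuousLinearMap.id ℂ H ∧ D.comp C = ContinuousLinearMap.id ℂ E) := by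
  set F' := ContinuousLinearMap.adjoint F with hF'
  set G' := ContinuousLinearMap.adjoint G with hG'
  have hn : ∀ x : J, ‖F' x‖ = ‖G' x‖ := by
    intro x
    have h1 : ⟪F' x, F' x⟫ = ⟪G' x, G' x⟫ := by
      rw [ContinuousLinearMap.adjoint_inner_left, ContinuousLinearMap.adjoint_inner_left]
      show ⟪x, (F.comp F') x⟫ = ⟪x, (G.comp G') x⟫
      rw [hFG]
    rw [inner_self_eq_norm_sq_to_K, inner_self_eq_norm_sq_to_K] at h1
    have h2 : ‖F' x‖ ^ 2 = ‖G' x‖ ^ 2 := by exact_mod_cast h1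
    nlinarith [norm_nonneg (F' x), norm_nonneg (G' x)]
  obtain ⟨V, hVn, hVeq⟩ := douglas_aux F G hn
  obtain ⟨W, hWn, hWeq⟩ := douglas_aux G F (fun x => (hn x).symm)
  refine ⟨ContinuousLinearMap.adjoint V, ContinuousLinearMap.adjoint W, ?_, ?_, ?_, ?_, ?_⟩
  · rw [ContinuousLinearMap.adjoint.norm_map]; exact hVn
  · rw [ContinuousLinearMap.adjoint.norm_map]; exact hWn
  · have h3 : V.comp G' = F' := ContinuousLinearMap.ext hVeq
    have h4 := congrArg (ContinuousLinearMap.adjoint : (J →L[ℂ] E) → (E →L[ℂ] J)) h3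
    simp only [hF', hG', ContinuousLinearMap.adjoint_comp,
      ContinuousLinearMap.adjoint_adjoint] at h4
    exact h4.symm
  · have h3 : W.comp F' = G' := ContinuousLinearMap.ext hWeq
    have h4 := congrArg (ContinuousLinearMap.adjoint : (J →L[ℂ] H) → (H →L[ℂ] J)) h3
    simp only [hF', hG', ContinuousLinearMap.adjoint_comp,
      ContinuousLinearMap.adjoint_adjoint] at h4
    exact h4.symm
  · intro hF hG
    have hWV : W.comp V = ContinuousLinearMap.id ℂ H := by
      apply ContinuousLinearMap.ext
      have hfun : ⇑(W.comp V) = _root_.id := by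
        apply Continuous.ext_on (dense_range_adjoint G hG) (W.comp V).continuous continuous_id
        rintro y ⟨x, rfl⟩
        show W (V (G' x)) = G' x
        rw [hVeq, hWeq]
      intro y
      exact congrFun hfun y
    have hVW : V.comp W = ContinuousLinearMap.id ℂ E := by
      apply ContinuousLinearMap.ext
      have hfun : ⇑(V.comp W) = _root_.id := by
        apply Continuous.ext_on (dense_range_adjoint F hF) (V.comp W).continuous continuous_id
        rintro y ⟨x, rfl⟩
        show V (W (F' x)) = F' x
        rw [hWeq, hVeq]
      intro y
      exact congrFun hfun y
    constructor
    · rw [← ContinuousLinearMap.adjoint_comp, hWV]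
      exact ContinuousLinearMap.adjoint_id
    · rw [← ContinuousLinearMap.adjoint_comp, hVW]
      exact ContinuousLinearMap.adjoint_id
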